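/- arXiv:1511.09470 — 2 statements merged into one kernel-verified Lean document; each statement's English description precedes it below -/
import Mathlib

section
/- Let g : ℝ → ℂ be a continuous Wiener-space function with ĝ = i·g. Then ∑_{k∈ℤ} g(√3·(k + 1/3)) = 0. -/
open MeasureTheory Complex Real FourierTransform

/-- The Zak transform `Z_λ f (x, γ) = √λ ∑_{k∈ℤ} f(λ(x+k)) e^{-2πikγ}`. -/
noncomputable def zak (lam : ℝ) (f : ℝ → ℂ) (x γ : ℝ) : ℂ :=
  (Real.sqrt lam : ℂ) *
    ∑' k : ℤ, f (lam * (x + k)) * Complex.exp (-2 * Real.pi * Complex.I * k * γ)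

/-- Membership in the Wiener space `W(ℝ)`:
`∑_{k∈ℤ} sup_{x∈[0,1]} |f(x+k)| < ∞`. -/
def InWiener (f : ℝ → ℂ) : Prop :=
  Summable (fun k : ℤ => ⨆ x : Set.Icc (0:ℝ) 1, ‖f ((x : ℝ) + k)‖)

/-! ### Auxiliary lemmas -/

/-- The Wiener-space majorant sequence. -/
noncomputable def Mg (g : ℝ → ℂ) : ℤ → ℝ :=
  fun k => ⨆ x : Set.Icc (0:ℝ) 1, ‖g ((x : ℝ) + k)‖

lemma Mg_nonneg (g : ℝ → ℂ) (k : ℤ) : 0 ≤ Mg g k :=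
  Real.iSup_nonneg fun _ => norm_nonneg _

lemma norm_le_Mg {g : ℝ → ℂ} (hg : Continuous g) (t : ℝ) : ‖g t‖ ≤ Mg g ⌊t⌋ := by
  have hb : BddAbove (Set.range fun x : Set.Icc (0:ℝ) 1 => ‖g ((x : ℝ) + ⌊t⌋)‖) :=
    (isCompact_range ((hg.comp (continuous_subtype_val.add continuous_const)).norm)).bddAbove
  have h := le_ciSup hb ⟨Int.fract t, ⟨Int.fract_nonneg t, (Int.fract_lt_one t).le⟩⟩
  simpa [Mg, Int.fract_add_floor] using h

lemma summable_Mg_shift {g : ℝ → ℂ} (hW : Summable (Mg g)) (j : ℤ) :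
    Summable fun k : ℤ => Mg g (k + j) :=
  hW.comp_injective (add_left_injective j)

lemma floor_comp_strictMono {a : ℝ} (ha : 1 ≤ a) (b : ℝ) :
    StrictMono fun n : ℤ => ⌊a * n + b⌋ := by
  intro n m h
  have hnm : (n : ℝ) + 1 ≤ m := by exact_mod_cast h
  have h1 : a * n + b + 1 ≤ a * m + b := by nlinarith
  calc ⌊a * (n:ℝ) + b⌋ < ⌊a * (n:ℝ) + b⌋ + 1 := lt_add_one _
    _ = ⌊a * (n:ℝ) + b + 1⌋ := (Int.floor_add_one _).symm
    _ ≤ ⌊a * (m:ℝ) + b⌋ := Int.floor_le_floor h1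

lemma summable_slice {g : ℝ → ℂ} (hg : Continuous g) (hW : Summable (Mg g))
    {a : ℝ} (ha : 1 ≤ a) (b : ℝ) : Summable fun n : ℤ => ‖g (a * n + b)‖ := by
  have hinj := (floor_comp_strictMono ha b).injective
  have hsum : Summable fun n : ℤ => Mg g (⌊a * n + b⌋) := hW.comp_injective hinj
  exact Summable.of_nonneg_of_le (fun n => norm_nonneg _) (fun n => norm_le_Mg hg _) hsum

lemma wiener_restrict_summable {g : ℝ → ℂ} (hg : Continuous g) (hW : Summable (Mg g))
    {a : ℝ} (ha : 1 ≤ a) (F : C(ℝ, ℂ)) (hF : ∀ x, F x = g (a * x))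
    (K : TopologicalSpace.Compacts ℝ) :
    Summable fun n : ℤ => ‖(F.comp (ContinuousMap.addRight (n:ℝ))).restrict K‖ := by
  obtain ⟨r, hr⟩ := K.isCompact.isBounded.subset_closedBall 0
  have ha0 : (0:ℝ) ≤ a := by linarith
  have hK : (K : Set ℝ) ⊆ Set.Icc (-r) r := by
    rwa [Real.closedBall_eq_Icc, zero_sub, zero_add] at hr
  set lo : ℤ := ⌊a * (-r)⌋ with hlo
  set hi : ℤ := ⌊a * r⌋ + 1 with hhi
  have hT : Summable fun n : ℤ => ∑ j ∈ Finset.Icc lo hi, Mg g (⌊a * (n:ℝ) + 0⌋ + j) := by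
    apply summable_sum
    intro j _
    exact (summable_Mg_shift hW j).comp_injective (floor_comp_strictMono ha 0).injective
  apply Summable.of_nonneg_of_le (fun n => norm_nonneg _) _ hT
  intro n
  have hTn0 : (0:ℝ) ≤ ∑ j ∈ Finset.Icc lo hi, Mg g (⌊a * (n:ℝ) + 0⌋ + j) :=
    Finset.sum_nonneg fun j _ => Mg_nonneg g _
  rw [ContinuousMap.norm_le _ hTn0]
  rintro ⟨y, hy⟩
  have hy' : y ∈ Set.Icc (-r) r := hK hy
  simp only [ContinuousMap.restrict_apply, ContinuousMap.comp_apply,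
    ContinuousMap.coe_addRight, hF]
  have h1 : ‖g (a * (y + n))‖ ≤ Mg g ⌊a * (y + n)⌋ := norm_le_Mg hg _
  set j : ℤ := ⌊a * (y + n)⌋ - ⌊a * (n:ℝ) + 0⌋ with hj
  have hmem : j ∈ Finset.Icc lo hi := by
    rw [Finset.mem_Icc]
    constructor
    · have hle : (lo : ℝ) + ⌊a * (n:ℝ) + 0⌋ ≤ a * (y + n) := by
        have g1 : (lo:ℝ) ≤ a * (-r) := Int.floor_le _
        have g2 : ((⌊a * (n:ℝ) + 0⌋ : ℤ) : ℝ) ≤ a * n + 0 := Int.floor_le _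
        have g3 : a * (-r) ≤ a * y := mul_le_mul_of_nonneg_left hy'.1 ha0
        have he : a * (y + n) = a * y + (a * n + 0) := by ring
        rw [he]; linarith
      have := Int.le_floor.mpr
        (by push_cast; linarith : ((lo + ⌊a * (n:ℝ) + 0⌋ : ℤ) : ℝ) ≤ a * (y + n))
      omega
    · have g1 : a * (n:ℝ) + 0 < ⌊a * (n:ℝ) + 0⌋ + 1 := Int.lt_floor_add_one _
      have g2 : a * r < ⌊a * r⌋ + 1 := Int.lt_floor_add_one _
      have g3 : a * y ≤ a * r := mul_le_mul_of_nonneg_left hy'.2 ha0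
      have h4 : ⌊a * (y + n)⌋ < ⌊a * (n:ℝ) + 0⌋ + (⌊a * r⌋ + 1) + 1 := by
        apply Int.floor_lt.mpr
        push_cast
        nlinarith
      omega
  calc ‖g (a * (y + n))‖ ≤ Mg g ⌊a * (y + n)⌋ := h1
    _ = Mg g (⌊a * (n:ℝ) + 0⌋ + j) := by rw [hj]; ring_nf
    _ ≤ ∑ j' ∈ Finset.Icc lo hi, Mg g (⌊a * (n:ℝ) + 0⌋ + j') :=
        Finset.single_le_sum (fun j' _ => Mg_nonneg g _) hmem

lemma fourier_scale (g : ℝ → ℂ) {a : ℝ} (ha : 0 < a) (γ : ℝ) :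
    𝓕 (fun x => g (a * x)) γ = (a : ℂ)⁻¹ * 𝓕 g (γ / a) := by
  rw [Real.fourier_real_eq, Real.fourier_real_eq]
  have key : (fun v : ℝ => 𝐞 (-(v * γ)) • g (a * v))
      = fun v : ℝ => (fun u : ℝ => 𝐞 (-(u * (γ / a))) • g u) (a * v) := by
    funext v
    simp only []
    congr 2
    field_simp
  rw [key, MeasureTheory.Measure.integral_comp_mul_left (fun u : ℝ => 𝐞 (-(u * (γ / a))) • g u) a]
  rw [abs_of_pos (inv_pos.mpr ha)]
  rw [← Complex.coe_smul, Complex.ofReal_inv]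
  rw [smul_eq_mul]

lemma div_sqrt3_eq (m : ℤ) (r : ℝ) :
    ((m : ℝ) * 3 + r) / Real.sqrt 3 = Real.sqrt 3 * ((m : ℝ) + r / 3) := by
  have h3 : Real.sqrt 3 * Real.sqrt 3 = 3 := Real.mul_self_sqrt (by norm_num)
  have h0 : Real.sqrt 3 ≠ 0 := by positivity
  field_simp
  linear_combination (-((m : ℝ) * 3 + r)) * h3

lemma one_le_sqrt3 : 1 ≤ Real.sqrt 3 := by
  rw [show (1:ℝ) = Real.sqrt 1 by simp]
  exact Real.sqrt_le_sqrt (by norm_num)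

lemma summable_norm_div_sqrt3 {g : ℝ → ℂ} (hg : Continuous g) (hW : Summable (Mg g)) :
    Summable fun n : ℤ => ‖g ((n : ℝ) / Real.sqrt 3)‖ := by
  have hs1 := one_le_sqrt3
  have base : ∀ r : ℝ, Summable fun m : ℤ => ‖g (Real.sqrt 3 * m + Real.sqrt 3 * r / 3)‖ :=
    fun r => summable_slice hg hW hs1 _
  have harg : ∀ (m r : ℤ), ((m * 3 + r : ℤ) : ℝ) / Real.sqrt 3
      = Real.sqrt 3 * m + Real.sqrt 3 * (r : ℝ) / 3 := by
    intro m r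
    push_cast
    rw [div_sqrt3_eq m (r : ℝ)]
    ring
  refine ((Int.divModEquiv 3).symm.summable_iff
    (f := fun n : ℤ => ‖g ((n : ℝ) / Real.sqrt 3)‖)).mp ?_
  refine (summable_prod_of_nonneg (fun p => norm_nonneg _)).mpr ⟨fun m => ?_, ?_⟩
  · exact .of_finite
  · have hsum3 : Summable fun m : ℤ =>
        (‖g (((m * 3 + 0 : ℤ) : ℝ) / Real.sqrt 3)‖ + ‖g (((m * 3 + 1 : ℤ) : ℝ) / Real.sqrt 3)‖
          + ‖g (((m * 3 + 2 : ℤ) : ℝ) / Real.sqrt 3)‖) := by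
      refine Summable.add (Summable.add ?_ ?_) ?_
      · exact (base ((0:ℤ):ℝ)).congr fun m => by rw [harg m 0]
      · exact (base ((1:ℤ):ℝ)).congr fun m => by rw [harg m 1]
      · exact (base ((2:ℤ):ℝ)).congr fun m => by rw [harg m 2]
    refine hsum3.congr fun m => ?_
    rw [tsum_fintype, Fin.sum_univ_three]
    simp [Int.divModEquiv, Function.comp]

lemma splits (φ : ℤ → ℂ) (hφ : Summable φ) :
    (∑' n : ℤ, φ n)
      = (∑' m : ℤ, φ (m * 3)) + (∑' m : ℤ, φ (m * 3 + 1)) + (∑' m : ℤ, φ (m * 3 + 2)) := by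
  have h0 : Summable fun m : ℤ => φ (m * 3) := hφ.comp_injective (fun a b h => by omega)
  have h1 : Summable fun m : ℤ => φ (m * 3 + 1) := hφ.comp_injective (fun a b h => by omega)
  have h2 : Summable fun m : ℤ => φ (m * 3 + 2) := hφ.comp_injective (fun a b h => by omega)
  calc (∑' n : ℤ, φ n) = ∑' p : ℤ × Fin 3, φ ((Int.divModEquiv 3).symm p) :=
        ((Int.divModEquiv 3).symm.tsum_eq φ).symm
    _ = ∑' m : ℤ, ∑' r : Fin 3, φ ((Int.divModEquiv 3).symm (m, r)) :=
        Summable.tsum_prod ((Int.divModEquiv 3).symm.summable_iff.mpr hφ)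
    _ = ∑' m : ℤ, (φ (m * 3) + φ (m * 3 + 1) + φ (m * 3 + 2)) := by
        refine tsum_congr fun m => ?_
        rw [tsum_fintype, Fin.sum_univ_three]
        simp [Int.divModEquiv]
    _ = _ := by
        rw [Summable.tsum_add (h0.add h1) h2, Summable.tsum_add h0 h1]

lemma exp_mod3 (m r j : ℤ) :
    Complex.exp (2 * π * Complex.I * ((m : ℂ) * 3 + r) * ((j : ℂ) / 3)) =
      Complex.exp (2 * π * Complex.I * r * j / 3) := by
  have key : (2 * (π:ℂ) * Complex.I * ((m : ℂ) * 3 + r) * ((j:ℂ) / 3))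
      = ((m * j : ℤ) : ℂ) * (2 * π * Complex.I) + 2 * π * Complex.I * r * j / 3 := by
    push_cast; ring
  rw [key, Complex.exp_add, Complex.exp_int_mul_two_pi_mul_I, one_mul]

theorem sum_eigen_i_sqrt_three (g : ℝ → ℂ) (hg : Continuous g) (hW : InWiener g)
    (heig : ∀ γ : ℝ, 𝓕 g γ = Complex.I * g γ) :
    ∑' k : ℤ, g (Real.sqrt 3 * ((k : ℝ) + 1/3)) = 0 := by
  have hW' : Summable (Mg g) := hW
  have hs3sq : Real.sqrt 3 * Real.sqrt 3 = 3 := Real.mul_self_sqrt (by norm_num)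
  have hs31 : 1 ≤ Real.sqrt 3 := one_le_sqrt3
  have hs3pos : 0 < Real.sqrt 3 := by linarith
  set s : ℂ := (Real.sqrt 3 : ℂ) with hsdef
  have hs : s ^ 2 = 3 := by
    rw [hsdef, sq, ← Complex.ofReal_mul, hs3sq]; norm_num
  have hs0 : s ≠ 0 := by
    rw [hsdef]
    exact_mod_cast Complex.ofReal_ne_zero.mpr (ne_of_gt hs3pos)
  -- the scaled function and its Fourier transform
  set F : C(ℝ, ℂ) := ⟨fun x => g (Real.sqrt 3 * x), hg.comp (continuous_const.mul continuous_id)⟩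
    with hFdef
  have hFf : ∀ γ : ℝ, 𝓕 (⇑F) γ = (s)⁻¹ * (Complex.I * g (γ / Real.sqrt 3)) := by
    intro γ
    have hco : ⇑F = fun x => g (Real.sqrt 3 * x) := rfl
    rw [hco, fourier_scale g hs3pos γ, heig]
  have hnorm : ∀ K : TopologicalSpace.Compacts ℝ,
      Summable fun n : ℤ => ‖(F.comp <| ContinuousMap.addRight (n:ℝ)).restrict K‖ :=
    fun K => wiener_restrict_summable hg hW' hs31 F (fun _ => rfl) K
  have hFsummable : Summable fun n : ℤ => 𝓕 (⇑F) n := by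
    apply Summable.of_norm
    refine ((summable_norm_div_sqrt3 hg hW').mul_left ‖(s)⁻¹‖).congr fun n => ?_
    rw [hFf]
    rw [norm_mul, norm_mul, Complex.norm_I, one_mul]
  -- Poisson summation for the scaled function
  set c : ℂ := (s)⁻¹ * Complex.I with hcdef
  have poisson : ∀ x : ℝ, (∑' n : ℤ, g (Real.sqrt 3 * (x + n)))
      = ∑' n : ℤ, (c * g ((n : ℝ) / Real.sqrt 3)) * Complex.exp (2 * π * Complex.I * n * x) := by
    intro x
    have h := Real.tsum_eq_tsum_fourier (f := F) hnorm hFsummable x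
    have hl : (∑' n : ℤ, g (Real.sqrt 3 * (x + n))) = ∑' n : ℤ, F (x + n) := rfl
    rw [hl, h]
    refine tsum_congr fun n => ?_
    rw [hFf, fourier_coe_apply]
    push_cast
    ring_nf
    rw [hcdef]
    ring
  -- summability of the Poisson series
  have hφs : ∀ x : ℝ, Summable fun n : ℤ =>
      (c * g ((n : ℝ) / Real.sqrt 3)) * Complex.exp (2 * π * Complex.I * n * x) := by
    intro x
    apply Summable.of_norm
    refine ((summable_norm_div_sqrt3 hg hW').mul_left ‖c‖).congr fun n => ?_
    have he : (2 * (π:ℂ) * Complex.I * n * x) = ((2 * π * n * x : ℝ) : ℂ) * Complex.I := by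
      push_cast; ring
    have h1 : ‖Complex.exp (2 * π * Complex.I * n * x)‖ = 1 := by
      rw [he]
      exact Complex.norm_exp_ofReal_mul_I _
    simp [norm_mul, h1]
  -- the three sums
  set S : ℤ → ℂ := fun r => ∑' m : ℤ, g (Real.sqrt 3 * ((m : ℝ) + (r : ℝ) / 3)) with hSdef
  -- slice evaluation
  have slice_eval : ∀ (j r m : ℤ),
      (c * g (((m * 3 + r : ℤ) : ℝ) / Real.sqrt 3))
          * Complex.exp (2 * π * Complex.I * ((m * 3 + r : ℤ) : ℂ) * (((j : ℝ) / 3 : ℝ) : ℂ))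
        = (c * Complex.exp (2 * π * Complex.I * r * j / 3))
          * g (Real.sqrt 3 * ((m : ℝ) + (r : ℝ) / 3)) := by
    intro j r m
    have harg : ((m * 3 + r : ℤ) : ℝ) / Real.sqrt 3
        = Real.sqrt 3 * ((m : ℝ) + (r : ℝ) / 3) := by
      push_cast
      exact div_sqrt3_eq m r
    have he : (2 * (π:ℂ) * Complex.I * ((m * 3 + r : ℤ) : ℂ) * (((j : ℝ) / 3 : ℝ) : ℂ))
        = 2 * π * Complex.I * ((m : ℂ) * 3 + r) * ((j : ℂ) / 3) := by
      push_cast; ring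
    rw [harg, he, exp_mod3]
    ring
  -- the master equation
  have EQ : ∀ j : ℤ, (∑' n : ℤ, g (Real.sqrt 3 * ((j : ℝ) / 3 + n)))
      = c * Complex.exp (2 * π * Complex.I * 0 * j / 3) * S 0
        + c * Complex.exp (2 * π * Complex.I * 1 * j / 3) * S 1
        + c * Complex.exp (2 * π * Complex.I * 2 * j / 3) * S 2 := by
    intro j
    rw [poisson ((j : ℝ) / 3), splits _ (hφs ((j : ℝ) / 3))]
    congr 1
    · congr 1
      · rw [show (∑' m : ℤ, (c * g (((m * 3 : ℤ) : ℝ) / Real.sqrt 3))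
            * Complex.exp (2 * π * Complex.I * ((m * 3 : ℤ) : ℂ) * (((j : ℝ) / 3 : ℝ) : ℂ)))
            = ∑' m : ℤ, (c * Complex.exp (2 * π * Complex.I * 0 * j / 3))
              * g (Real.sqrt 3 * ((m : ℝ) + ((0:ℤ) : ℝ) / 3)) from
          tsum_congr fun m => by
            have h := slice_eval j 0 m
            simpa using h, tsum_mul_left]
      · rw [show (∑' m : ℤ, (c * g (((m * 3 + 1 : ℤ) : ℝ) / Real.sqrt 3))
            * Complex.exp (2 * π * Complex.I * ((m * 3 + 1 : ℤ) : ℂ) * (((j : ℝ) / 3 : ℝ) : ℂ)))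
            = ∑' m : ℤ, (c * Complex.exp (2 * π * Complex.I * 1 * j / 3))
              * g (Real.sqrt 3 * ((m : ℝ) + ((1:ℤ) : ℝ) / 3)) from
          tsum_congr fun m => by
            have h := slice_eval j 1 m
            simpa using h, tsum_mul_left]
    · rw [show (∑' m : ℤ, (c * g (((m * 3 + 2 : ℤ) : ℝ) / Real.sqrt 3))
          * Complex.exp (2 * π * Complex.I * ((m * 3 + 2 : ℤ) : ℂ) * (((j : ℝ) / 3 : ℝ) : ℂ)))
          = ∑' m : ℤ, (c * Complex.exp (2 * π * Complex.I * 2 * j / 3))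
            * g (Real.sqrt 3 * ((m : ℝ) + ((2:ℤ) : ℝ) / 3)) from
        tsum_congr fun m => by
          have h := slice_eval j 2 m
          simpa using h, tsum_mul_left]
  -- roots of unity values
  have hw1 : Complex.exp (2 * π * Complex.I / 3) = (-1 + s * Complex.I) / 2 := by
    have he : (2 * (π:ℂ) * Complex.I / 3) = ((2 * π / 3 : ℝ) : ℂ) * Complex.I := by
      push_cast; ring
    rw [he, Complex.exp_mul_I, ← Complex.ofReal_cos, ← Complex.ofReal_sin]
    have hc : Real.cos (2 * π / 3) = -(1/2) := by
      rw [show (2 * π / 3 : ℝ) = π - π / 3 by ring, Real.cos_pi_sub, Real.cos_pi_div_three]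
    have hsn : Real.sin (2 * π / 3) = Real.sqrt 3 / 2 := by
      rw [show (2 * π / 3 : ℝ) = π - π / 3 by ring, Real.sin_pi_sub, Real.sin_pi_div_three]
    rw [hc, hsn, hsdef]
    push_cast
    ring
  have hw2 : Complex.exp (4 * π * Complex.I / 3) = (-1 - s * Complex.I) / 2 := by
    rw [show (4 * (π:ℂ) * Complex.I / 3) = 2 * π * Complex.I / 3 + 2 * π * Complex.I / 3 by ring,
      Complex.exp_add, hw1]
    linear_combination (s^2/4) * Complex.I_sq - (1/4 : ℂ) * hs
  have hw4 : Complex.exp (8 * π * Complex.I / 3) = (-1 + s * Complex.I) / 2 := by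
    rw [show (8 * (π:ℂ) * Complex.I / 3)
        = ((1 : ℤ) : ℂ) * (2 * π * Complex.I) + 2 * π * Complex.I / 3 by push_cast; ring,
      Complex.exp_add, Complex.exp_int_mul_two_pi_mul_I, one_mul, hw1]
  -- specialize the master equation
  have hLHS : ∀ j : ℤ, (∑' n : ℤ, g (Real.sqrt 3 * ((j : ℝ) / 3 + n))) = S j := by
    intro j
    rw [hSdef]
    exact tsum_congr fun n => by rw [add_comm ((j:ℝ)/3) (n:ℝ)]
  have E0 : S 0 = c * (S 0 + S 1 + S 2) := by
    have h := EQ 0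
    rw [hLHS 0] at h
    refine h.trans ?_
    norm_num [Complex.exp_zero]
    ring
  have E1 : S 1 = c * (S 0 + (-1 + s * Complex.I) / 2 * S 1 + (-1 - s * Complex.I) / 2 * S 2) := by
    have h := EQ 1
    rw [hLHS 1] at h
    refine h.trans ?_
    push_cast
    rw [show (2 * (π:ℂ) * Complex.I * 0 * 1 / 3) = 0 by ring, Complex.exp_zero,
      show (2 * (π:ℂ) * Complex.I * 1 * 1 / 3) = 2 * π * Complex.I / 3 by ring,
      show (2 * (π:ℂ) * Complex.I * 2 * 1 / 3) = 4 * π * Complex.I / 3 by ring, hw1, hw2]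
    ring
  have E2 : S 2 = c * (S 0 + (-1 - s * Complex.I) / 2 * S 1 + (-1 + s * Complex.I) / 2 * S 2) := by
    have h := EQ 2
    rw [hLHS 2] at h
    refine h.trans ?_
    push_cast
    rw [show (2 * (π:ℂ) * Complex.I * 0 * 2 / 3) = 0 by ring, Complex.exp_zero,
      show (2 * (π:ℂ) * Complex.I * 1 * 2 / 3) = 4 * π * Complex.I / 3 by ring,
      show (2 * (π:ℂ) * Complex.I * 2 * 2 / 3) = 8 * π * Complex.I / 3 by ring, hw2, hw4]
    ring
  -- turn into polynomial equations
  have h0 : s * S 0 = Complex.I * (S 0 + S 1 + S 2) := by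
    have h : s * S 0 = s * (c * (S 0 + S 1 + S 2)) := congrArg (fun z => s * z) E0
    rw [h, hcdef, ← mul_assoc, ← mul_assoc, mul_inv_cancel₀ hs0, one_mul]
  have h1 : s * S 1
      = Complex.I * (S 0 + (-1 + s * Complex.I) / 2 * S 1 + (-1 - s * Complex.I) / 2 * S 2) := by
    have h : s * S 1 = s * (c * (S 0 + (-1 + s * Complex.I) / 2 * S 1 + (-1 - s * Complex.I) / 2 * S 2)) :=
      congrArg (fun z => s * z) E1
    rw [h, hcdef, ← mul_assoc, ← mul_assoc, mul_inv_cancel₀ hs0, one_mul]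
  have h2 : s * S 2
      = Complex.I * (S 0 + (-1 - s * Complex.I) / 2 * S 1 + (-1 + s * Complex.I) / 2 * S 2) := by
    have h : s * S 2 = s * (c * (S 0 + (-1 - s * Complex.I) / 2 * S 1 + (-1 + s * Complex.I) / 2 * S 2)) :=
      congrArg (fun z => s * z) E2
    rw [h, hcdef, ← mul_assoc, ← mul_assoc, mul_inv_cancel₀ hs0, one_mul]
  -- the algebra
  have hA : (2 * s) * (S 1 - S 2) = 0 := by
    linear_combination h1 - h2 + s * (S 1 - S 2) * Complex.I_sq
  have h12 : S 2 = S 1 := by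
    have h2s : (2 : ℂ) * s ≠ 0 := mul_ne_zero two_ne_zero hs0
    rcases mul_eq_zero.mp hA with h | h
    · exact absurd h h2s
    · exact (sub_eq_zero.mp h).symm
  have hB : 6 * Complex.I * S 1 = 0 := by
    linear_combination (-1 : ℂ) * h0 + (s * Complex.I + 1) * h1
      + (-3/2 * Complex.I - Complex.I * Complex.I * s
          - 1/2 * Complex.I * Complex.I * Complex.I * s * s) * h12
      + (s * S 0 - s * S 1) * Complex.I_sq + (- Complex.I * S 1) * hs
  have hS1 : S 1 = 0 := by
    have h6I : (6 : ℂ) * Complex.I ≠ 0 := by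
      simp [Complex.I_ne_zero]
    rcases mul_eq_zero.mp hB with h | h
    · exact absurd h h6I
    · exact h
  -- conclude
  rw [show (∑' k : ℤ, g (Real.sqrt 3 * ((k : ℝ) + 1/3))) = S 1 from
    tsum_congr fun k => by norm_num]
  exact hS1
end

section
/- For every m ∈ ℕ ∪ {0} and p ∈ {1,5}, the Hermite function h_{4m+2} satisfies ∑_{k∈ℤ} (−1)^k h_{4m+2}(√3·(k + p/6)) = 0. -/
open MeasureTheory Complex Real FourierTransform

/-- The `n`-th Hermite function `h_n(x) = c_n^{-1/2} e^{π x²} (d/dx)^n e^{-2π x²}`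
with `c_n = (2π)^n 2^{n-1/2} n!`. -/
noncomputable def hermiteFun (n : ℕ) (x : ℝ) : ℝ :=
  ((2 * Real.pi) ^ n * (2:ℝ) ^ ((n : ℝ) - 1/2) * (n.factorial : ℝ)) ^ (-(1/2 : ℝ)) *
    Real.exp (Real.pi * x ^ 2) * iteratedDeriv n (fun t => Real.exp (-2 * Real.pi * t ^ 2)) x


open Polynomial

noncomputable section

/-- Auxiliary polynomials: `D^n e^{-2πx²} = (P n).eval x * e^{-2πx²}`. -/
def Pa : ℕ → Polynomial ℝ
  | 0 => 1
  | (n+1) => derivative (Pa n) - Polynomial.C (4 * Real.pi) * Polynomial.X * Pa n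

lemma gauss_hasDerivAt (x : ℝ) :
    HasDerivAt (fun t : ℝ => Real.exp (-2 * Real.pi * t ^ 2))
      ((-4 * Real.pi * x) * Real.exp (-2 * Real.pi * x ^ 2)) x := by
  have h1 : HasDerivAt (fun t : ℝ => -2 * Real.pi * t ^ 2) (-4 * Real.pi * x) x := by
    have h := (hasDerivAt_pow 2 x).const_mul (-2 * Real.pi)
    convert! h using 1
    ring
  simpa [mul_comm] using h1.exp

lemma iteratedDeriv_gauss (n : ℕ) :
    iteratedDeriv n (fun t : ℝ => Real.exp (-2 * Real.pi * t ^ 2)) =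
      fun x => (Pa n).eval x * Real.exp (-2 * Real.pi * x ^ 2) := by
  induction n with
  | zero => simp [Pa]
  | succ n ih =>
      rw [iteratedDeriv_succ, ih]
      ext x
      have h : HasDerivAt (fun x : ℝ => (Pa n).eval x * Real.exp (-2 * Real.pi * x ^ 2))
          ((Pa (n+1)).eval x * Real.exp (-2 * Real.pi * x ^ 2)) x := by
        have := ((Pa n).hasDerivAt x).mul (gauss_hasDerivAt x)
        convert! this using 1
        simp [Pa]
        ring
      exact h.deriv

lemma hermiteFun_eq (n : ℕ) (x : ℝ) :
    hermiteFun n x =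
      ((2 * Real.pi) ^ n * (2:ℝ) ^ ((n : ℝ) - 1/2) * (n.factorial : ℝ)) ^ (-(1/2 : ℝ)) *
        ((Pa n).eval x * Real.exp (-Real.pi * x ^ 2)) := by
  rw [hermiteFun, iteratedDeriv_gauss]
  rw [mul_assoc]
  congr 1
  rw [mul_comm (Real.exp _), mul_assoc, ← Real.exp_add]
  ring_nf

/-- parity of the polynomials -/
lemma Pa_comp_neg (n : ℕ) : (Pa n).comp (-X) = (-1) ^ n * Pa n := by
  induction n with
  | zero => simp [Pa]
  | succ n ih =>
      have hd : (derivative (Pa n)).comp (-X) = - derivative ((Pa n).comp (-X)) := by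
        rw [Polynomial.derivative_comp]
        simp [mul_comm]
      simp only [Pa, sub_comp, mul_comp, C_comp, X_comp, hd, ih]
      have hz : derivative ((-1 : Polynomial ℝ) ^ n) = 0 := by
        simp [derivative_pow]
      rw [derivative_mul, hz]
      ring
lemma Pa_eval_neg (n : ℕ) (x : ℝ) : (Pa n).eval (-x) = (-1) ^ n * (Pa n).eval x := by
  have := congrArg (Polynomial.eval x) (Pa_comp_neg n)
  simpa [Polynomial.eval_comp] using this

section Phi
open Polynomial
/-- polynomial times standard gaussian, complex valued -/
def Phi (Q : Polynomial ℝ) : ℝ → ℂ :=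
  fun x => ((Q.eval x : ℝ) : ℂ) * Complex.exp (-Real.pi * (x:ℂ) ^ 2)

lemma Phi_continuous (Q : Polynomial ℝ) : Continuous (Phi Q) := by
  unfold Phi
  fun_prop

lemma gaussC_hasDerivAt (x : ℝ) :
    HasDerivAt (fun x : ℝ => Complex.exp (-Real.pi * (x:ℂ) ^ 2))
      ((-2 * Real.pi * x) * Complex.exp (-Real.pi * (x:ℂ) ^ 2)) x := by
  have h : HasDerivAt (fun z : ℂ => Complex.exp (-Real.pi * z ^ 2))
      ((-2 * Real.pi * x) * Complex.exp (-Real.pi * (x:ℂ) ^ 2)) (x : ℂ) := by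
    have h1 : HasDerivAt (fun z : ℂ => -Real.pi * z ^ 2) (-2 * Real.pi * x) (x : ℂ) := by
      have := (hasDerivAt_pow 2 (x:ℂ)).const_mul (-Real.pi : ℂ)
      convert! this using 1
      push_cast; ring
    simpa [mul_comm] using h1.cexp
  exact h.comp_ofReal

lemma Phi_hasDerivAt (Q : Polynomial ℝ) (x : ℝ) :
    HasDerivAt (Phi Q)
      (Phi (derivative Q - Polynomial.C (2 * Real.pi) * Polynomial.X * Q) x) x := by
  have h1 : HasDerivAt (fun x : ℝ => ((Q.eval x : ℝ) : ℂ)) (((derivative Q).eval x : ℝ) : ℂ) x :=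
    (Q.hasDerivAt x).ofReal_comp
  have := h1.mul (gaussC_hasDerivAt x)
  convert! this using 1
  unfold Phi
  simp only [Polynomial.eval_sub, Polynomial.eval_mul, Polynomial.eval_C, Polynomial.eval_X]
  push_cast
  ring

lemma Phi_deriv (Q : Polynomial ℝ) :
    deriv (Phi Q) = Phi (derivative Q - Polynomial.C (2 * Real.pi) * Polynomial.X * Q) :=
  funext fun x => (Phi_hasDerivAt Q x).deriv

lemma Phi_differentiable (Q : Polynomial ℝ) : Differentiable ℝ (Phi Q) :=
  fun x => (Phi_hasDerivAt Q x).differentiableAt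

/-- bounded helper -/
lemma exists_bound_cocompact {u : ℝ → ℝ} (hu : Continuous u)
    (h : Filter.Tendsto u (Filter.cocompact ℝ) (nhds 0)) : ∃ C : ℝ, ∀ x, |u x| ≤ C := by
  have h1 : ∀ᶠ x in Filter.cocompact ℝ, |u x| ≤ 1 := by
    have := h.eventually (Metric.ball_mem_nhds (0:ℝ) one_pos)
    filter_upwards [this] with x hx
    simpa [Real.dist_eq] using le_of_lt hx
  rw [Filter.eventually_iff, Filter.mem_cocompact] at h1
  obtain ⟨K, hK, hKs⟩ := h1
  obtain ⟨C, hC⟩ := (hK.image (continuous_abs.comp hu)).bddAbove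
  refine ⟨max C 1, fun x => ?_⟩
  by_cases hx : x ∈ K
  · exact le_max_of_le_left (hC ⟨x, hx, rfl⟩)
  · exact le_max_of_le_right (hKs hx)

lemma poly_gauss_bounded (Q : Polynomial ℝ) {b : ℝ} (hb : 0 < b) :
    ∃ C : ℝ, ∀ x : ℝ, |Q.eval x * Real.exp (-b * x ^ 2)| ≤ C := by
  apply exists_bound_cocompact (by fun_prop)
  -- |Q.eval x| * exp(-b x²) → 0
  have : ∀ x : ℝ, Q.eval x * Real.exp (-b * x ^ 2) =
      ∑ i ∈ Finset.range (Q.natDegree + 1), Q.coeff i * (x ^ i * Real.exp (-b * x ^ 2)) := by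
    intro x
    rw [Polynomial.eval_eq_sum_range, Finset.sum_mul]
    simp [mul_assoc]
  simp only [this]
  rw [show (0:ℝ) = ∑ i ∈ Finset.range (Q.natDegree + 1), (Q.coeff i * 0) by simp]
  apply tendsto_finset_sum
  intro i _
  apply Filter.Tendsto.const_mul
  have h2 := tendsto_rpow_abs_mul_exp_neg_mul_sq_cocompact hb (i : ℝ)
  have h3 : Filter.Tendsto (fun x : ℝ => |x| ^ (i:ℕ) * Real.exp (-b * x ^ 2))
      (Filter.cocompact ℝ) (nhds 0) := by
    convert h2 using 2 with x
    rw [Real.rpow_natCast]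
  have h4 : ∀ x : ℝ, |x ^ i * Real.exp (-b * x ^ 2)| = |x| ^ i * Real.exp (-b * x ^ 2) := by
    intro x
    rw [abs_mul, _root_.abs_pow, abs_of_pos (Real.exp_pos _)]
  exact (tendsto_zero_iff_abs_tendsto_zero _).2 (by simpa only [Function.comp_def, h4] using h3)

end Phi

section Analysis
open Polynomial Filter Asymptotics

lemma Phi_norm (Q : Polynomial ℝ) (x : ℝ) :
    ‖Phi Q x‖ = |Q.eval x| * Real.exp (-Real.pi * x ^ 2) := by
  unfold Phi
  rw [norm_mul, Complex.norm_real, Complex.norm_exp]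
  congr 1
  have : (-(Real.pi:ℂ) * (x:ℂ) ^ 2) = ((-Real.pi * x ^ 2 : ℝ) : ℂ) := by push_cast; ring
  rw [this, Complex.ofReal_re]

lemma Phi_integrable (Q : Polynomial ℝ) : Integrable (Phi Q) := by
  obtain ⟨C, hC⟩ := poly_gauss_bounded Q (b := Real.pi - 1) (by
    have := Real.pi_gt_three; linarith)
  apply Integrable.mono' (g := fun x => C * Real.exp (-1 * x ^ 2))
    ((integrable_exp_neg_mul_sq one_pos).const_mul C |>.congr ?_)
    (Phi_continuous Q).aestronglyMeasurable
  · filter_upwards with x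
    rw [Phi_norm]
    have h1 := hC x
    have h2 : |Q.eval x * Real.exp (-(Real.pi - 1) * x ^ 2)| =
        |Q.eval x| * Real.exp (-(Real.pi - 1) * x ^ 2) := by
      rw [abs_mul, abs_of_pos (Real.exp_pos _)]
    rw [h2] at h1
    have h3 : Real.exp (-Real.pi * x ^ 2) =
        Real.exp (-(Real.pi - 1) * x ^ 2) * Real.exp (-1 * x ^ 2) := by
      rw [← Real.exp_add]; ring_nf
    rw [h3, ← mul_assoc]
    exact mul_le_mul_of_nonneg_right h1 (Real.exp_pos _).le
  · filter_upwards with x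
    norm_num

lemma Phi_decay (Q : Polynomial ℝ) :
    (Phi Q) =O[cocompact ℝ] (fun x : ℝ => |x| ^ (-2 : ℝ)) := by
  obtain ⟨C, hC⟩ := poly_gauss_bounded (Polynomial.X ^ 2 * Q) Real.pi_pos
  rw [isBigO_iff]
  refine ⟨C, ?_⟩
  have hev : {x : ℝ | 1 ≤ |x|} ∈ cocompact ℝ := by
    rw [Filter.mem_cocompact]
    refine ⟨Metric.closedBall 0 1, isCompact_closedBall 0 1, fun x hx => ?_⟩
    simp only [Set.mem_compl_iff, Metric.mem_closedBall, Real.dist_eq, sub_zero, not_le] at hx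
    exact le_of_lt hx
  filter_upwards [hev] with x hx
  have hx0 : (0:ℝ) < |x| := lt_of_lt_of_le one_pos hx
  have h1 := hC x
  rw [Polynomial.eval_mul, Polynomial.eval_pow, Polynomial.eval_X, abs_mul, abs_mul,
    abs_of_pos (Real.exp_pos _), _root_.abs_pow] at h1
  -- h1 : |x|^2 * |Q.eval x| * exp(-π x²) ≤ C
  rw [Phi_norm, Real.norm_eq_abs, _root_.abs_of_nonneg (Real.rpow_nonneg (abs_nonneg x) _)]
  have hrp : |x| ^ (-2:ℝ) = (|x| ^ (2:ℕ))⁻¹ := by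
    rw [show (-2:ℝ) = -((2:ℕ):ℝ) by norm_num, Real.rpow_neg (abs_nonneg x), Real.rpow_natCast]
  rw [hrp, _root_.sq_abs, ← div_eq_mul_inv, le_div_iff₀ (by rw [← _root_.sq_abs x]; exact pow_pos hx0 2 : (0:ℝ) < x ^ 2)]
  calc |Q.eval x| * Real.exp (-Real.pi * x ^ 2) * x ^ 2
      = |x| ^ 2 * |Q.eval x| * Real.exp (-Real.pi * x ^ 2) := by rw [_root_.sq_abs]; ring
    _ ≤ C := h1


lemma affine_rpow_isBigO (a b : ℝ) (ha : a ≠ 0) :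
    (fun t : ℝ => |a * t + b| ^ (-2:ℝ)) =O[cocompact ℝ] (fun t : ℝ => |t| ^ (-2:ℝ)) := by
  rw [isBigO_iff]
  refine ⟨(|a| / 2) ^ (-2:ℝ), ?_⟩
  have ha0 : (0:ℝ) < |a| := abs_pos.2 ha
  set M : ℝ := max 1 (2 * |b| / |a|) with hM
  have hev : {x : ℝ | M ≤ |x|} ∈ cocompact ℝ := by
    rw [Filter.mem_cocompact]
    refine ⟨Metric.closedBall 0 M, isCompact_closedBall 0 M, fun x hx => ?_⟩
    simp only [Set.mem_compl_iff, Metric.mem_closedBall, Real.dist_eq, sub_zero, not_le] at hx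
    exact le_of_lt hx
  filter_upwards [hev] with t ht
  have ht1 : (1:ℝ) ≤ |t| := le_trans (le_max_left _ _) ht
  have ht0 : (0:ℝ) < |t| := lt_of_lt_of_le one_pos ht1
  have hb2 : 2 * |b| / |a| ≤ |t| := le_trans (le_max_right _ _) ht
  have hkey : |a| / 2 * |t| ≤ |a * t + b| := by
    have h1 : |b| ≤ |a| * |t| / 2 := by
      rw [div_le_iff₀ ha0] at hb2
      linarith
    have h2 : |a * t| - |b| ≤ |a * t + b| := by
      have := abs_sub_abs_le_abs_sub (a * t) (-b)
      simp only [sub_neg_eq_add, abs_neg] at this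
      linarith
    rw [abs_mul] at h2
    linarith
  have hpos : (0:ℝ) < |a| / 2 * |t| := by positivity
  have h3 : |a * t + b| ^ (-2:ℝ) ≤ (|a| / 2 * |t|) ^ (-2:ℝ) :=
    Real.rpow_le_rpow_of_nonpos hpos hkey (by norm_num)
  rw [Real.norm_eq_abs, Real.norm_eq_abs, _root_.abs_of_nonneg (Real.rpow_nonneg (abs_nonneg _) _),
    _root_.abs_of_nonneg (Real.rpow_nonneg (abs_nonneg _) _)]
  calc |a * t + b| ^ (-2:ℝ) ≤ (|a| / 2 * |t|) ^ (-2:ℝ) := h3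
    _ = (|a| / 2) ^ (-2:ℝ) * |t| ^ (-2:ℝ) := Real.mul_rpow (by positivity) (abs_nonneg t)

lemma affine_tendsto_cocompact (a b : ℝ) (ha : a ≠ 0) :
    Tendsto (fun t : ℝ => a * t + b) (cocompact ℝ) (cocompact ℝ) := by
  have h := ((Homeomorph.mulLeft₀ a ha).trans
    (Homeomorph.addRight b)).map_cocompact (X := ℝ)
  have : Tendsto (⇑((Homeomorph.mulLeft₀ a ha).trans (Homeomorph.addRight b)))
      (cocompact ℝ) (cocompact ℝ) := h.le
  exact this

lemma Phi_affine_decay (Q : Polynomial ℝ) (a b : ℝ) (ha : a ≠ 0) :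
    (fun t : ℝ => Phi Q (a * t + b)) =O[cocompact ℝ] (fun x : ℝ => |x| ^ (-2 : ℝ)) :=
  ((Phi_decay Q).comp_tendsto (affine_tendsto_cocompact a b ha)).trans
    (affine_rpow_isBigO a b ha)

lemma summable_phi (Q : Polynomial ℝ) (a b : ℝ) (ha : a ≠ 0) :
    Summable (fun k : ℤ => Phi Q (a * (k:ℝ) + b)) :=
  summable_of_isBigO (Real.summable_abs_int_rpow one_lt_two)
    (((Phi_affine_decay Q a b ha)).comp_tendsto Int.tendsto_coe_cofinite)

lemma summable_phi_norm (Q : Polynomial ℝ) (a b : ℝ) (ha : a ≠ 0) :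
    Summable (fun k : ℤ => ‖Phi Q (a * (k:ℝ) + b)‖) :=
  summable_norm_iff.2 (summable_phi Q a b ha)

end Analysis

section FourierEigen
open Polynomial Filter Asymptotics

lemma xsmul_Phi (Q : Polynomial ℝ) :
    (fun x : ℝ => x • Phi Q x) = Phi (Polynomial.X * Q) := by
  funext x
  unfold Phi
  rw [Polynomial.eval_mul, Polynomial.eval_X]
  push_cast
  rw [Complex.real_smul]
  ring

lemma xmul_Phi_integrable (Q : Polynomial ℝ) :
    Integrable (fun x : ℝ => x • Phi Q x) := by
  rw [xsmul_Phi]; exact Phi_integrable _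

lemma fourier_add_mul {f g : ℝ → ℂ} (hf : Integrable f) (hg : Integrable g) (c : ℂ) (w : ℝ) :
    𝓕 (fun x => f x + c * g x) w = 𝓕 f w + c * 𝓕 g w := by
  simp_rw [Real.fourier_real_eq_integral_exp_smul, smul_eq_mul, mul_add]
  have hbd : ∀ (h : ℝ → ℂ), Integrable h →
      Integrable (fun v : ℝ => Complex.exp (((-2 * Real.pi * v * w : ℝ) : ℂ) * Complex.I) * h v) := by
    intro h hh
    apply hh.bdd_mul (c := 1) ?_ (Filter.Eventually.of_forall fun v => ?_)
    · apply Continuous.aestronglyMeasurable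
      fun_prop
    · rw [Complex.norm_exp]
      simp [Complex.ofReal_mul]
  rw [show (fun v : ℝ => Complex.exp (((-2 * Real.pi * v * w : ℝ) : ℂ) * Complex.I) * f v +
        Complex.exp (((-2 * Real.pi * v * w : ℝ) : ℂ) * Complex.I) * (c * g v)) =
      (fun v : ℝ => Complex.exp (((-2 * Real.pi * v * w : ℝ) : ℂ) * Complex.I) * f v) +
      (fun v : ℝ => c * (Complex.exp (((-2 * Real.pi * v * w : ℝ) : ℂ) * Complex.I) * g v)) by
    funext v; simp; ring]
  rw [MeasureTheory.integral_add' (hbd f hf) ((hbd g hg).const_mul c),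
    MeasureTheory.integral_const_mul]

lemma fourier_eigen (n : ℕ) :
    𝓕 (Phi (Pa n)) = fun ξ : ℝ => (-Complex.I) ^ n * Phi (Pa n) ξ := by
  induction n with
  | zero =>
      have h := fourier_gaussian_pi (b := (1:ℂ)) (by norm_num)
      funext ξ
      have h1 : Phi (Pa 0) = fun x : ℝ => Complex.exp (-(Real.pi:ℂ) * (1:ℂ) * (x:ℂ) ^ 2) := by
        funext x; unfold Phi; simp [Pa]
      rw [h1, h]
      simp [Phi, Pa, Complex.one_cpow]
  | succ n ih =>
      have key : Phi (Pa (n+1)) = fun x : ℝ =>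
          deriv (Phi (Pa n)) x + (-Complex.I) * ((-2 * Real.pi * Complex.I * x) • Phi (Pa n) x) := by
        funext x
        rw [Phi_deriv]
        unfold Phi
        simp only [Pa, Polynomial.eval_sub, Polynomial.eval_mul, Polynomial.eval_C,
          Polynomial.eval_X, smul_eq_mul]
        push_cast
        ring_nf
        rw [Complex.I_sq]
        ring
      funext ξ
      conv_lhs => rw [key]
      have hd : Integrable (deriv (Phi (Pa n))) := by
        rw [Phi_deriv]; exact Phi_integrable _
      have hsm : Integrable (fun x : ℝ => (-2 * Real.pi * Complex.I * x) • Phi (Pa n) x) := by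
        have : (fun x : ℝ => (-2 * Real.pi * Complex.I * x) • Phi (Pa n) x) =
            fun x : ℝ => (-2 * Real.pi * Complex.I) * (x • Phi (Pa n) x) := by
          funext x; simp [smul_eq_mul]; ring
        rw [this]
        exact (xmul_Phi_integrable (Pa n)).const_mul _
      rw [show (fun x : ℝ => deriv (Phi (Pa n)) x +
            (-Complex.I) * ((-2 * Real.pi * Complex.I * x) • Phi (Pa n) x)) =
          (fun x : ℝ => deriv (Phi (Pa n)) x +
            (-Complex.I) * ((fun y : ℝ => (-2 * Real.pi * Complex.I * y) • Phi (Pa n) y) x)) from rfl]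
      rw [fourier_add_mul hd hsm (-Complex.I) ξ]
      rw [Real.fourier_deriv (Phi_integrable _) (Phi_differentiable _)
        (by rw [Phi_deriv]; exact Phi_integrable _)]
      rw [← Real.deriv_fourier (Phi_integrable _) (xmul_Phi_integrable _)]
      rw [ih]
      have hder : deriv (fun ξ : ℝ => (-Complex.I) ^ n * Phi (Pa n) ξ) ξ =
          (-Complex.I) ^ n *
            Phi (derivative (Pa n) - Polynomial.C (2 * Real.pi) * Polynomial.X * Pa n) ξ :=
        ((Phi_hasDerivAt (Pa n) ξ).const_mul ((-Complex.I) ^ n)).deriv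
      rw [hder]
      unfold Phi
      simp only [Pa, Polynomial.eval_sub, Polynomial.eval_mul, Polynomial.eval_C,
        Polynomial.eval_X, smul_eq_mul, pow_succ]
      push_cast
      ring

end FourierEigen

section Poisson
open Polynomial Filter Asymptotics

lemma fourier_comp_mul (f : ℝ → ℂ) (a : ℝ) (ha : 0 < a) (w : ℝ) :
    𝓕 (fun x : ℝ => f (a * x)) w = (a⁻¹ : ℝ) • 𝓕 f (w / a) := by
  rw [Real.fourier_real_eq_integral_exp_smul,
    Real.fourier_real_eq_integral_exp_smul]
  have key := MeasureTheory.Measure.integral_comp_mul_left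
      (g := fun u : ℝ => Complex.exp (((-2 * Real.pi * (u / a) * w : ℝ):ℂ) * Complex.I) • f u) a
  have h1 : (fun x : ℝ => Complex.exp (((-2 * Real.pi * (a * x / a) * w : ℝ):ℂ) * Complex.I)
      • f (a * x)) = fun x : ℝ =>
        Complex.exp (((-2 * Real.pi * x * w : ℝ):ℂ) * Complex.I) • f (a * x) := by
    funext x
    rw [mul_div_cancel_left₀ _ (ne_of_gt ha)]
  rw [h1] at key
  rw [key, abs_inv, abs_of_pos ha]
  congr 1
  apply MeasureTheory.integral_congr_ae
  filter_upwards with u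
  congr 2
  push_cast
  ring

lemma poisson_phi (Q : Polynomial ℝ) (hQeig : 𝓕 (Phi Q) = fun ξ : ℝ => -Phi Q ξ)
    (a : ℝ) (ha : 0 < a) (x : ℝ) :
    ∑' k : ℤ, Phi Q (a * (x + (k:ℝ))) =
      ∑' k : ℤ, -((a:ℂ))⁻¹ * Phi Q ((k:ℝ) / a) *
        Complex.exp (2 * Real.pi * Complex.I * (k:ℤ) * x) := by
  have hcont : Continuous fun t : ℝ => Phi Q (a * t) :=
    (Phi_continuous Q).comp (continuous_const.mul continuous_id)
  have hdecay : (fun t : ℝ => Phi Q (a * t)) =O[cocompact ℝ] (|·| ^ (-2:ℝ)) := by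
    have := Phi_affine_decay Q a 0 (ne_of_gt ha)
    simpa using this
  have hFT : 𝓕 (fun t : ℝ => Phi Q (a * t)) = fun w : ℝ => (a⁻¹ : ℝ) • (-Phi Q (w / a)) := by
    funext w
    rw [fourier_comp_mul (Phi Q) a ha w, hQeig]
  have hFdecay : (𝓕 fun t : ℝ => Phi Q (a * t)) =O[cocompact ℝ] (|·| ^ (-2:ℝ)) := by
    rw [hFT]
    have h2 : (fun w : ℝ => Phi Q (w / a)) =O[cocompact ℝ] (|·| ^ (-2:ℝ)) := by
      have heq : (fun w : ℝ => Phi Q (w / a)) = fun w : ℝ => Phi Q (a⁻¹ * w + 0) := by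
        funext w; rw [add_zero, inv_mul_eq_div]
      rw [heq]
      exact Phi_affine_decay Q a⁻¹ 0 (inv_ne_zero (ne_of_gt ha))
    exact (h2.neg_left).const_smul_left (a⁻¹ : ℝ)
  have hP := Real.tsum_eq_tsum_fourier_of_rpow_decay hcont one_lt_two hdecay hFdecay x
  have hL : ∑' k : ℤ, Phi Q (a * (x + (k:ℝ))) = ∑' n : ℤ, (fun t : ℝ => Phi Q (a * t)) (x + n) :=
    rfl
  rw [hL, hP]
  apply tsum_congr
  intro k
  rw [hFT, fourier_coe_apply]
  simp only [Complex.ofReal_one, div_one, Complex.real_smul, Complex.ofReal_inv]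
  push_cast
  ring
end Poisson

section TsumSplit

lemma tsum_int_even_odd (w : ℤ → ℂ) (hw : Summable w) :
    ∑' k : ℤ, w k = (∑' k : ℤ, w (2 * k)) + ∑' k : ℤ, w (2 * k + 1) := by
  let e := (Int.divModEquiv 2).symm
  have h1 : ∑' p : ℤ × Fin 2, w (e p) = ∑' k : ℤ, w k := e.tsum_eq w
  have hsum : Summable fun p : ℤ × Fin 2 => w (e p) := hw.comp_injective e.injective
  rw [← h1, Summable.tsum_prod hsum]
  have h2 : ∀ a : ℤ, ∑' b : Fin 2, w (e (a, b)) = w (2 * a) + w (2 * a + 1) := by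
    intro a
    rw [tsum_fintype, Fin.sum_univ_two]
    have e0 : e (a, 0) = 2 * a := by
      show a * 2 + ((0 : Fin 2) : ℤ) = 2 * a
      simp [mul_comm]
    have e1 : e (a, 1) = 2 * a + 1 := by
      show a * 2 + ((1 : Fin 2) : ℤ) = 2 * a + 1
      simp [mul_comm]
    rw [e0, e1]
  rw [tsum_congr h2]
  apply Summable.tsum_add
  · exact hw.comp_injective (fun x y h => by omega)
  · exact hw.comp_injective (fun x y h => by omega)

lemma tsum_int_mod3 (w : ℤ → ℂ) (hw : Summable w) :
    ∑' k : ℤ, w k =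
      (∑' k : ℤ, w (3 * k)) + (∑' k : ℤ, w (3 * k + 1)) + ∑' k : ℤ, w (3 * k + 2) := by
  let e := (Int.divModEquiv 3).symm
  have h1 : ∑' p : ℤ × Fin 3, w (e p) = ∑' k : ℤ, w k := e.tsum_eq w
  have hsum : Summable fun p : ℤ × Fin 3 => w (e p) := hw.comp_injective e.injective
  rw [← h1, Summable.tsum_prod hsum]
  have h2 : ∀ a : ℤ, ∑' b : Fin 3, w (e (a, b)) = w (3 * a) + w (3 * a + 1) + w (3 * a + 2) := by
    intro a
    rw [tsum_fintype, Fin.sum_univ_three]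
    have e0 : e (a, 0) = 3 * a := by
      show a * 3 + ((0 : Fin 3) : ℤ) = 3 * a
      simp [mul_comm]
    have e1 : e (a, 1) = 3 * a + 1 := by
      show a * 3 + ((1 : Fin 3) : ℤ) = 3 * a + 1
      simp [mul_comm]
    have e2 : e (a, 2) = 3 * a + 2 := by
      show a * 3 + ((2 : Fin 3) : ℤ) = 3 * a + 2
      simp [mul_comm]
    rw [e0, e1, e2]
  rw [tsum_congr h2]
  have hs0 : Summable fun k : ℤ => w (3 * k) := hw.comp_injective (fun x y h => by omega)
  have hs1 : Summable fun k : ℤ => w (3 * k + 1) := hw.comp_injective (fun x y h => by omega)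
  have hs2 : Summable fun k : ℤ => w (3 * k + 2) := hw.comp_injective (fun x y h => by omega)
  rw [Summable.tsum_add (hs0.add hs1) hs2, Summable.tsum_add hs0 hs1]

/-- reflection `k ↦ -1 - k` -/
lemma tsum_int_reflect (f : ℤ → ℂ) : ∑' k : ℤ, f k = ∑' k : ℤ, f (-1 - k) := by
  let e : ℤ ≃ ℤ := ⟨fun k => -1 - k, fun k => -1 - k, fun k => by ring, fun k => by ring⟩
  have h := (e.tsum_eq f).symm
  simpa only [Equiv.coe_fn_mk, e] using h

lemma neg_one_zpow_reflect (k : ℤ) : (-1 : ℂ) ^ (-1 - k) = -(-1 : ℂ) ^ k := by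
  rcases Int.even_or_odd k with ⟨t, ht⟩ | ⟨t, ht⟩
  · rw [Odd.neg_one_zpow ⟨-t - 1, by omega⟩, Even.neg_one_zpow (⟨t, by omega⟩ : Even k)]
  · rw [Even.neg_one_zpow (⟨-t - 1, by omega⟩ : Even (-1 - k)),
      Odd.neg_one_zpow (⟨t, by omega⟩ : Odd k)]
    norm_num

lemma exp_pi_I_int (k : ℤ) : Complex.exp (Real.pi * Complex.I * k) = (-1 : ℂ) ^ k := by
  have h : (Real.pi * Complex.I * k : ℂ) = k * (Real.pi * Complex.I) := by ring
  rw [h, Complex.exp_int_mul, Complex.exp_pi_mul_I]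

end TsumSplit

section Main
open Polynomial

def Sig (m : ℕ) (r : ℝ) : ℂ :=
  ∑' k : ℤ, (-1:ℂ)^k * Phi (Pa (4*m+2)) (Real.sqrt 3 * ((k:ℝ) + r))

lemma eig42 (m : ℕ) : 𝓕 (Phi (Pa (4*m+2))) = fun ξ : ℝ => -Phi (Pa (4*m+2)) ξ := by
  rw [fourier_eigen]
  funext ξ
  have h : (-Complex.I)^(4*m+2) = -1 := by
    rw [show 4*m+2 = 2*(2*m+1) by ring, pow_mul, neg_sq, Complex.I_sq]
    exact Odd.neg_one_pow ⟨m, by ring⟩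
  rw [h]
  ring

lemma phi_even (m : ℕ) (y : ℝ) : Phi (Pa (4*m+2)) (-y) = Phi (Pa (4*m+2)) y := by
  unfold Phi
  rw [Pa_eval_neg]
  have h1 : ((-1:ℝ))^(4*m+2) = 1 := Even.neg_one_pow ⟨2*m+1, by ring⟩
  rw [h1]
  push_cast
  ring_nf

lemma Sig_half (m : ℕ) : Sig m (1/2) = 0 := by
  have h := tsum_int_reflect (fun k : ℤ =>
    (-1:ℂ)^k * Phi (Pa (4*m+2)) (Real.sqrt 3 * ((k:ℝ) + 1/2)))
  have h2 : ∀ k : ℤ, (-1:ℂ)^(-1-k) * Phi (Pa (4*m+2)) (Real.sqrt 3 * (((-1-k : ℤ):ℝ) + 1/2)) =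
      -((-1:ℂ)^k * Phi (Pa (4*m+2)) (Real.sqrt 3 * ((k:ℝ) + 1/2))) := by
    intro k
    rw [neg_one_zpow_reflect]
    have harg : Real.sqrt 3 * (((-1-k : ℤ):ℝ) + 1/2) = -(Real.sqrt 3 * ((k:ℝ) + 1/2)) := by
      push_cast; ring
    rw [harg, phi_even]
    ring
  have h3 : Sig m (1/2) = -Sig m (1/2) := by
    unfold Sig
    nth_rewrite 1 [h]
    rw [tsum_congr h2, tsum_neg]
  have h4 : (2:ℂ) * Sig m (1/2) = 0 := by linear_combination h3
  simpa using h4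

lemma Sig_56 (m : ℕ) : Sig m (5/6) = -Sig m (1/6) := by
  have h := tsum_int_reflect (fun k : ℤ =>
    (-1:ℂ)^k * Phi (Pa (4*m+2)) (Real.sqrt 3 * ((k:ℝ) + 5/6)))
  have h2 : ∀ k : ℤ, (-1:ℂ)^(-1-k) * Phi (Pa (4*m+2)) (Real.sqrt 3 * (((-1-k : ℤ):ℝ) + 5/6)) =
      -((-1:ℂ)^k * Phi (Pa (4*m+2)) (Real.sqrt 3 * ((k:ℝ) + 1/6))) := by
    intro k
    rw [neg_one_zpow_reflect]
    have harg : Real.sqrt 3 * (((-1-k : ℤ):ℝ) + 5/6) = -(Real.sqrt 3 * ((k:ℝ) + 1/6)) := by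
      push_cast; ring
    rw [harg, phi_even]
    ring
  unfold Sig
  nth_rewrite 1 [h]
  rw [tsum_congr h2, tsum_neg]

lemma Sig16 (m : ℕ) : Sig m (1/6) = 0 := by
  set Q := Pa (4*m+2) with hQ
  set s3 := Real.sqrt 3 with hs3def
  have hs3 : 0 < s3 := Real.sqrt_pos.2 (by norm_num)
  have h33 : s3 * s3 = 3 := Real.mul_self_sqrt (by norm_num)
  have hs3ne : s3 ≠ 0 := ne_of_gt hs3
  set A : ℤ → ℂ := fun k => Phi Q (s3 * (k:ℝ) / 6) *
    Complex.exp (Real.pi * Complex.I * (k:ℤ) / 6) with hA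
  -- norm of phases
  have hphase : ∀ z : ℂ, z.re = 0 → ‖Complex.exp z‖ = 1 := by
    intro z hz
    rw [Complex.norm_exp, hz, Real.exp_zero]
  have hAnorm : ∀ k : ℤ, ‖A k‖ = ‖Phi Q (s3 * (k:ℝ) / 6)‖ := by
    intro k
    rw [hA]
    simp only []
    rw [norm_mul, hphase _ (by simp [Complex.div_re]), mul_one]
  -- summabilities
  have SA : Summable A := by
    apply Summable.of_norm_bounded (summable_phi_norm Q (s3/6) 0 (by positivity))
    intro k
    rw [hAnorm k]
    apply le_of_eq
    congr 1
    ring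
  have Su : Summable (fun k : ℤ => (-1:ℂ)^k * Phi Q (s3 * ((k:ℝ) + 1/6))) := by
    apply Summable.of_norm_bounded (summable_phi_norm Q s3 (s3 * (1/6)) hs3ne)
    intro k
    rw [norm_mul, norm_zpow, norm_neg, norm_one, one_zpow, one_mul]
    apply le_of_eq
    congr 1
    ring
  have SuN : Summable (fun k : ℤ => Phi Q (s3 * ((k:ℝ) + 1/6))) := by
    apply Summable.of_norm_bounded (summable_phi_norm Q s3 (s3 * (1/6)) hs3ne)
    intro k
    apply le_of_eq
    congr 1
    ring
  have Sw : Summable (fun k : ℤ => A (2*k+1)) := by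
    apply Summable.of_norm_bounded (summable_phi_norm Q (s3/3) (s3/6) (by positivity))
    intro k
    rw [hAnorm (2*k+1)]
    apply le_of_eq
    congr 1
    push_cast
    ring
  -- Poisson for a = √3
  have TA := poisson_phi Q (eig42 m) s3 hs3 (1/6)
  have TB := poisson_phi Q (eig42 m) (2*s3) (by positivity) (1/12)
  -- rewrite RHS of TA in terms of A(2k)
  have RA : ∑' k : ℤ, -((s3:ℝ):ℂ)⁻¹ * Phi Q ((k:ℝ)/s3) *
      Complex.exp (2 * Real.pi * Complex.I * (k:ℤ) * ((1/6 : ℝ):ℂ)) =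
      -((s3:ℝ):ℂ)⁻¹ * ∑' k : ℤ, A (2*k) := by
    rw [← tsum_mul_left]
    apply tsum_congr
    intro k
    rw [hA]
    simp only []
    have harg : s3 * ((2*k : ℤ):ℝ) / 6 = (k:ℝ) / s3 := by
      push_cast
      rw [div_eq_div_iff (by norm_num) hs3ne]
      linear_combination 2*(k:ℝ) * h33
    rw [harg]
    have hph : Complex.exp (Real.pi * Complex.I * ((2*k : ℤ):ℤ) / 6) =
        Complex.exp (2 * Real.pi * Complex.I * (k:ℤ) * ((1/6 : ℝ):ℂ)) := by
      congr 1
      push_cast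
      ring
    rw [hph]
    ring
  -- rewrite RHS of TB in terms of A k
  have RB : ∑' k : ℤ, -(((2*s3 : ℝ)):ℂ)⁻¹ * Phi Q ((k:ℝ)/(2*s3)) *
      Complex.exp (2 * Real.pi * Complex.I * (k:ℤ) * ((1/12 : ℝ):ℂ)) =
      -(((2*s3 : ℝ)):ℂ)⁻¹ * ∑' k : ℤ, A k := by
    rw [← tsum_mul_left]
    apply tsum_congr
    intro k
    rw [hA]
    simp only []
    have harg : s3 * (k:ℝ) / 6 = (k:ℝ) / (2*s3) := by
      rw [div_eq_div_iff (by norm_num) (by positivity)]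
      linear_combination 2*(k:ℝ) * h33
    rw [harg]
    have hph : Complex.exp (Real.pi * Complex.I * (k:ℤ) / 6) =
        Complex.exp (2 * Real.pi * Complex.I * (k:ℤ) * ((1/12 : ℝ):ℂ)) := by
      congr 1
      push_cast
      ring
    rw [hph]
    ring
  -- LHS of TB equals sum over even shifts
  have LB : ∑' k : ℤ, Phi Q ((2*s3) * ((1/12 : ℝ) + (k:ℝ))) =
      ∑' k : ℤ, Phi Q (s3 * (((2*k : ℤ):ℝ) + 1/6)) := by
    apply tsum_congr
    intro k
    congr 1
    push_cast
    ring
  have LA : ∑' k : ℤ, Phi Q (s3 * ((1/6 : ℝ) + (k:ℝ))) =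
      ∑' k : ℤ, Phi Q (s3 * ((k:ℝ) + 1/6)) := by
    apply tsum_congr
    intro k
    congr 1
    ring
  -- even/odd split of the signed sum
  have hsplitS : Sig m (1/6) =
      (∑' k : ℤ, Phi Q (s3 * (((2*k : ℤ):ℝ) + 1/6))) -
      ∑' k : ℤ, Phi Q (s3 * (((2*k+1 : ℤ):ℝ) + 1/6)) := by
    unfold Sig
    rw [← hQ, ← hs3def]
    rw [tsum_int_even_odd _ Su]
    have he : ∀ k : ℤ, (-1:ℂ)^(2*k) * Phi Q (s3 * (((2*k : ℤ):ℝ) + 1/6)) =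
        Phi Q (s3 * (((2*k : ℤ):ℝ) + 1/6)) := by
      intro k
      rw [Even.neg_one_zpow ⟨k, by ring⟩, one_mul]
    have ho : ∀ k : ℤ, (-1:ℂ)^(2*k+1) * Phi Q (s3 * (((2*k+1 : ℤ):ℝ) + 1/6)) =
        -Phi Q (s3 * (((2*k+1 : ℤ):ℝ) + 1/6)) := by
      intro k
      rw [Odd.neg_one_zpow ⟨k, by ring⟩]
      ring
    rw [tsum_congr he, tsum_congr ho, tsum_neg]
    ring
  -- even/odd split of the unsigned sum
  have hsplitU : ∑' k : ℤ, Phi Q (s3 * ((k:ℝ) + 1/6)) =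
      (∑' k : ℤ, Phi Q (s3 * (((2*k : ℤ):ℝ) + 1/6))) +
      ∑' k : ℤ, Phi Q (s3 * (((2*k+1 : ℤ):ℝ) + 1/6)) :=
    tsum_int_even_odd _ SuN
  -- even/odd split of A
  have hsplitA : ∑' k : ℤ, A k = (∑' k : ℤ, A (2*k)) + ∑' k : ℤ, A (2*k+1) :=
    tsum_int_even_odd A SA
  -- hence
  have hEven : ∑' k : ℤ, Phi Q (s3 * (((2*k : ℤ):ℝ) + 1/6)) =
      -(((2*s3 : ℝ)):ℂ)⁻¹ * ∑' k : ℤ, A k := by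
    rw [← RB, ← TB, LB]
  have hAll : ∑' k : ℤ, Phi Q (s3 * ((k:ℝ) + 1/6)) =
      -((s3:ℝ):ℂ)⁻¹ * ∑' k : ℤ, A (2*k) := by
    rw [← RA, ← TA, LA]
  have key1 : Sig m (1/6) = -((s3:ℝ):ℂ)⁻¹ * ∑' k : ℤ, A (2*k+1) := by
    have h5 : ∑' k : ℤ, Phi Q (s3 * (((2*k+1 : ℤ):ℝ) + 1/6)) =
        (∑' k : ℤ, Phi Q (s3 * ((k:ℝ) + 1/6))) -
        ∑' k : ℤ, Phi Q (s3 * (((2*k : ℤ):ℝ) + 1/6)) := by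
      rw [hsplitU]; ring
    rw [hsplitS, h5, hEven, hAll, hsplitA]
    have h2inv : (((2*s3 : ℝ)):ℂ)⁻¹ = (2:ℂ)⁻¹ * ((s3:ℝ):ℂ)⁻¹ := by
      push_cast
      rw [mul_inv]
    rw [h2inv]
    ring
  -- mod 3 split of A(2k+1)
  have hmod3 : ∑' k : ℤ, A (2*k+1) =
      (∑' k : ℤ, A (6*k+1)) + (∑' k : ℤ, A (6*k+3)) + ∑' k : ℤ, A (6*k+5) := by
    rw [tsum_int_mod3 _ Sw]
    congr 1
    · congr 1
      · apply tsum_congr; intro k; congr 1; ring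
      · apply tsum_congr; intro k; congr 1; ring
    · apply tsum_congr; intro k; congr 1; ring
  -- each residue class
  have hres : ∀ r : ℤ, (0 ≤ r) → ∑' k : ℤ, A (6*k+r) =
      Complex.exp (Real.pi * Complex.I * (r:ℤ) / 6) * Sig m ((r:ℝ)/6) := by
    intro r hr
    unfold Sig
    rw [← hQ, ← hs3def, ← tsum_mul_left]
    apply tsum_congr
    intro k
    rw [hA]
    simp only []
    have harg : s3 * ((6*k+r : ℤ):ℝ) / 6 = s3 * ((k:ℝ) + (r:ℝ)/6) := by
      push_cast
      ring
    have hph : Complex.exp (Real.pi * Complex.I * ((6*k+r : ℤ):ℤ) / 6) =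
        Complex.exp (Real.pi * Complex.I * (k:ℤ)) *
          Complex.exp (Real.pi * Complex.I * (r:ℤ) / 6) := by
      rw [← Complex.exp_add]
      congr 1
      push_cast
      ring
    rw [harg, hph, exp_pi_I_int]
    ring
  -- assemble
  have e1 : Complex.exp (Real.pi * Complex.I * ((1:ℤ):ℤ) / 6) =
      (Real.cos (Real.pi/6) : ℂ) + (Real.sin (Real.pi/6) : ℂ) * Complex.I := by
    rw [show (Real.pi * Complex.I * ((1:ℤ):ℤ) / 6 : ℂ) = ((Real.pi/6 : ℝ) : ℂ) * Complex.I by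
      push_cast; ring]
    rw [Complex.exp_mul_I, Complex.ofReal_cos, Complex.ofReal_sin]
  have e5 : Complex.exp (Real.pi * Complex.I * ((5:ℤ):ℤ) / 6) =
      (Real.cos (5*Real.pi/6) : ℂ) + (Real.sin (5*Real.pi/6) : ℂ) * Complex.I := by
    rw [show (Real.pi * Complex.I * ((5:ℤ):ℤ) / 6 : ℂ) = ((5*Real.pi/6 : ℝ) : ℂ) * Complex.I by
      push_cast; ring]
    rw [Complex.exp_mul_I, Complex.ofReal_cos, Complex.ofReal_sin]
  have hcos : Real.cos (5*Real.pi/6) = -(Real.sqrt 3/2) := by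
    rw [show 5*Real.pi/6 = Real.pi - Real.pi/6 by ring, Real.cos_pi_sub, Real.cos_pi_div_six]
  have hsin : Real.sin (5*Real.pi/6) = 1/2 := by
    rw [show 5*Real.pi/6 = Real.pi - Real.pi/6 by ring, Real.sin_pi_sub, Real.sin_pi_div_six]
  have ediff : Complex.exp (Real.pi * Complex.I * ((1:ℤ):ℤ) / 6) -
      Complex.exp (Real.pi * Complex.I * ((5:ℤ):ℤ) / 6) = ((s3:ℝ):ℂ) := by
    rw [e1, e5, hcos, hsin, Real.cos_pi_div_six, Real.sin_pi_div_six]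
    rw [hs3def]
    push_cast
    ring
  have hX : ∑' k : ℤ, A (2*k+1) =
      (Complex.exp (Real.pi * Complex.I * ((1:ℤ):ℤ) / 6) -
        Complex.exp (Real.pi * Complex.I * ((5:ℤ):ℤ) / 6)) * Sig m (1/6) := by
    rw [hmod3, hres 1 (by norm_num), hres 3 (by norm_num), hres 5 (by norm_num)]
    have h36 : ((3:ℤ):ℝ)/6 = 1/2 := by norm_num
    have h16 : ((1:ℤ):ℝ)/6 = 1/6 := by norm_num
    have h56 : ((5:ℤ):ℝ)/6 = 5/6 := by norm_num
    rw [h36, h16, h56, Sig_half, Sig_56]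
    ring
  have hfin : Sig m (1/6) = -((s3:ℝ):ℂ)⁻¹ * (((s3:ℝ):ℂ) * Sig m (1/6)) := by
    conv_lhs => rw [key1, hX, ediff]
  have hinv : ((s3:ℝ):ℂ)⁻¹ * ((s3:ℝ):ℂ) = 1 := by
    rw [inv_mul_cancel₀]
    exact_mod_cast hs3ne
  have h2S : (2:ℂ) * Sig m (1/6) = 0 := by
    linear_combination hfin - Sig m (1/6) * hinv
  simpa using h2S

end Main

section Final
open Polynomial

lemma Phi_ofReal (Q : Polynomial ℝ) (y : ℝ) :
    Phi Q y = ((Q.eval y * Real.exp (-Real.pi * y ^ 2) : ℝ) : ℂ) := by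
  unfold Phi
  rw [Complex.ofReal_mul, Complex.ofReal_exp]
  congr 2
  push_cast
  ring

lemma real_sum_eq_zero (m : ℕ) (r : ℝ) (hr : Sig m r = 0) :
    ∑' k : ℤ, (-1 : ℝ)^k * hermiteFun (4*m+2) (Real.sqrt 3 * ((k:ℝ) + r)) = 0 := by
  set c : ℝ := ((2 * Real.pi) ^ (4*m+2) * (2:ℝ) ^ (((4*m+2 : ℕ) : ℝ) - 1/2) *
    ((4*m+2).factorial : ℝ)) ^ (-(1/2 : ℝ)) with hc
  have hterm : ∀ k : ℤ, (-1:ℝ)^k * hermiteFun (4*m+2) (Real.sqrt 3 * ((k:ℝ) + r)) =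
      c * ((-1:ℝ)^k * ((Pa (4*m+2)).eval (Real.sqrt 3 * ((k:ℝ) + r)) *
        Real.exp (-Real.pi * (Real.sqrt 3 * ((k:ℝ) + r)) ^ 2))) := by
    intro k
    rw [hermiteFun_eq]
    ring
  rw [tsum_congr hterm, tsum_mul_left]
  have hzero : ∑' k : ℤ, (-1:ℝ)^k * ((Pa (4*m+2)).eval (Real.sqrt 3 * ((k:ℝ) + r)) *
      Real.exp (-Real.pi * (Real.sqrt 3 * ((k:ℝ) + r)) ^ 2)) = 0 := by
    have hco : ((∑' k : ℤ, (-1:ℝ)^k * ((Pa (4*m+2)).eval (Real.sqrt 3 * ((k:ℝ) + r)) *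
        Real.exp (-Real.pi * (Real.sqrt 3 * ((k:ℝ) + r)) ^ 2)) : ℝ) : ℂ) = Sig m r := by
      rw [Complex.ofReal_tsum]
      unfold Sig
      apply tsum_congr
      intro k
      rw [Complex.ofReal_mul, Phi_ofReal]
      congr 1
      rw [show ((-1:ℝ)^k : ℝ) = ((-1:ℝ))^k from rfl]
      push_cast
      ring
    rw [hr] at hco
    exact_mod_cast hco
  rw [hzero, mul_zero]

end Final

theorem hermite_4m2_sum_sqrt3 (m : ℕ) :
    ∀ p ∈ ({1, 5} : Set ℕ),
      ∑' k : ℤ, (-1 : ℝ) ^ k * hermiteFun (4 * m + 2) (Real.sqrt 3 * ((k : ℝ) + (p : ℝ) / 6)) = 0 := by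
  intro p hp
  rcases hp with hp | hp
  · subst hp
    have h : ((1:ℕ) : ℝ) / 6 = (1/6 : ℝ) := by norm_num
    rw [h]
    exact real_sum_eq_zero m (1/6) (Sig16 m)
  · have hp5 : p = 5 := hp
    subst hp5
    have h : ((5:ℕ) : ℝ) / 6 = (5/6 : ℝ) := by norm_num
    rw [h]
    apply real_sum_eq_zero m (5/6)
    rw [Sig_56, Sig16]
    ring
end
end
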